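/- arXiv:2209.07304 — 4 statements merged into one kernel-verified Lean document; each statement's English description precedes it below -/
import Mathlib

section
/- If x* satisfies the single-virus SIS fixed point equations for (A, τ), where A is the adjacency matrix of a connected undirected graph on N ≥ 1 vertices and τ > 0, then the largest entry satisfies max_{i} x*_i ≥ 1 − 1/(τ·λ(A)). -/
open Matrix Finset

-- Collatz–Wielandt upper bound
lemma spec_abs_le {N : ℕ} (A : Matrix (Fin N) (Fin N) ℝ) (hpos : ∀ i j, 0 ≤ A i j)
    (x : Fin N → ℝ) (hx : ∀ i, 0 < x i) (c : ℝ)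
    (hb : ∀ i, ∑ j, A i j * x j ≤ c * x i) :
    ∀ μ ∈ spectrum ℂ (A.map Complex.ofReal), ‖μ‖ ≤ c := by
  intro μ hμ
  set M := A.map Complex.ofReal with hM
  rw [← AlgEquiv.spectrum_eq (Matrix.toLinAlgEquiv' : Matrix (Fin N) (Fin N) ℂ ≃ₐ[ℂ] _) M,
      ← Module.End.hasEigenvalue_iff_mem_spectrum] at hμ
  obtain ⟨v, hv⟩ := hμ.exists_hasEigenvector
  have hv0 : v ≠ 0 := hv.right
  have hMv : M *ᵥ v = μ • v := by
    have h := hv.apply_eq_smul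
    rwa [Matrix.toLinAlgEquiv'_apply] at h
  obtain ⟨j0, hj0⟩ : ∃ j, v j ≠ 0 := Function.ne_iff.mp hv0
  obtain ⟨i, _, hi⟩ := Finset.exists_max_image Finset.univ
    (fun i => ‖v i‖ / x i) ⟨j0, Finset.mem_univ j0⟩
  set r := ‖v i‖ / x i with hr
  have hrj : ∀ j, ‖v j‖ ≤ r * x j := fun j => by
    have := hi j (Finset.mem_univ j)
    calc ‖v j‖ = (‖v j‖ / x j) * x j :=
          (div_mul_cancel₀ _ (hx j).ne').symm
      _ ≤ r * x j := by
          exact mul_le_mul_of_nonneg_right this (hx j).le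
  have hrpos : 0 < r := lt_of_lt_of_le (div_pos (by simpa using hj0) (hx j0)) (hi j0 (Finset.mem_univ j0))
  have hvi : ‖v i‖ = r * x i := by rw [hr, div_mul_cancel₀ _ (hx i).ne']
  have key : ‖μ‖ * (r * x i) ≤ c * (r * x i) := by
    calc ‖μ‖ * (r * x i) = ‖μ‖ * ‖v i‖ := by rw [hvi]
      _ = ‖μ * v i‖ := (norm_mul μ (v i)).symm
      _ = ‖(M *ᵥ v) i‖ := by rw [hMv]; simp
      _ = ‖∑ j, M i j * v j‖ := by rfl
      _ ≤ ∑ j, ‖M i j * v j‖ := norm_sum_le _ _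
      _ = ∑ j, A i j * ‖v j‖ := by
          refine Finset.sum_congr rfl fun j _ => ?_
          rw [norm_mul]
          simp [hM, Matrix.map_apply, abs_of_nonneg (hpos i j)]
      _ ≤ ∑ j, A i j * (r * x j) := by
          refine Finset.sum_le_sum fun j _ => mul_le_mul_of_nonneg_left (hrj j) (hpos i j)
      _ = r * ∑ j, A i j * x j := by rw [Finset.mul_sum]; exact Finset.sum_congr rfl fun j _ => by ring
      _ ≤ r * (c * x i) := mul_le_mul_of_nonneg_left (hb i) hrpos.le
      _ = c * (r * x i) := by ring
  exact le_of_mul_le_mul_right key (mul_pos hrpos (hx i))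


lemma herm_exists_eigenvalue_ne_zero {N : ℕ} {M : Matrix (Fin N) (Fin N) ℂ}
    (hM : M.IsHermitian) (hne : M ≠ 0) : ∃ k, hM.eigenvalues k ≠ 0 := by
  by_contra h
  push_neg at h
  apply hne
  have hb : ∀ k, M *ᵥ ⇑(hM.eigenvectorBasis k) = 0 := fun k => by
    rw [hM.mulVec_eigenvectorBasis, h k]
    simp
  have h0 : Matrix.toEuclideanLin M = 0 := by
    apply hM.eigenvectorBasis.toBasis.ext
    intro k
    simp only [Matrix.toEuclideanLin_apply, OrthonormalBasis.coe_toBasis, LinearMap.zero_apply]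
    simp [hb k]
  have := Matrix.toEuclideanLin.injective (by rw [h0]; simp : Matrix.toEuclideanLin M = Matrix.toEuclideanLin 0)
  exact this


/-- Spectral radius of a real matrix: supremum of absolute values of its complex eigenvalues. -/
noncomputable def specRad {N : ℕ} (M : Matrix (Fin N) (Fin N) ℝ) : ℝ :=
  sSup ((fun z : ℂ => ‖z‖) '' spectrum ℂ (M.map Complex.ofReal))

/-- `A` is the adjacency matrix of a connected undirected graph:
symmetric, 0/1 entries, zero diagonal, and irreducible (connectivity). -/
def IsConnectedAdjMatrix {N : ℕ} (A : Matrix (Fin N) (Fin N) ℝ) : Prop :=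
  A.IsSymm ∧ (∀ i j, A i j = 0 ∨ A i j = 1) ∧ (∀ i, A i i = 0) ∧
    (∀ i j, i ≠ j → ∃ k : ℕ, 0 < (A ^ k) i j)

/-- `x` satisfies the single-virus SIS fixed point equations for `(A, τ)`. -/
def IsSISFixedPoint {N : ℕ} (A : Matrix (Fin N) (Fin N) ℝ) (τ : ℝ)
    (x : Fin N → ℝ) : Prop :=
  (∀ i, 0 < x i ∧ x i < 1) ∧ (∀ i, ∑ j, A i j * x j = x i / (τ * (1 - x i)))

/-- If `x*` satisfies the single-virus SIS fixed point equations for `(A, τ)`,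
where `A` is the adjacency matrix of a connected undirected graph on `N ≥ 1` vertices and
`τ > 0`, then the largest entry satisfies `max_i x*_i ≥ 1 − 1/(τ·λ(A))`. -/
theorem max_entry_lower_bound {N : ℕ} (hN : 1 ≤ N)
    (A : Matrix (Fin N) (Fin N) ℝ) (hA : IsConnectedAdjMatrix A)
    (τ : ℝ) (hτ : 0 < τ)
    (xstar : Fin N → ℝ) (hx : IsSISFixedPoint A τ xstar) :
    1 - 1 / (τ * specRad A) ≤
      Finset.univ.sup' ⟨⟨0, hN⟩, Finset.mem_univ _⟩ xstar := by
  obtain ⟨hs, h01, hdiag, hirr⟩ := hA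
  obtain ⟨hxpos, hxeq⟩ := hx
  have hpos : ∀ i j, 0 ≤ A i j := fun i j => by rcases h01 i j with h | h <;> simp [h]
  set i₀ : Fin N := ⟨0, hN⟩
  set ne : (Finset.univ : Finset (Fin N)).Nonempty := ⟨i₀, Finset.mem_univ _⟩
  set m : ℝ := Finset.univ.sup' ne xstar with hm
  have hm1 : m < 1 := (Finset.sup'_lt_iff ne).mpr fun i _ => (hxpos i).2
  have hm0 : 0 < m := lt_of_lt_of_le (hxpos i₀).1 (Finset.le_sup' xstar (Finset.mem_univ i₀))
  have hτm : 0 < τ * (1 - m) := mul_pos hτ (by linarith)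
  set c : ℝ := 1 / (τ * (1 - m)) with hc
  have hcpos : 0 < c := by positivity
  have hbound : ∀ i, ∑ j, A i j * xstar j ≤ c * xstar i := by
    intro i
    rw [hxeq i]
    have hxim : xstar i ≤ m := Finset.le_sup' xstar (Finset.mem_univ i)
    have hle : τ * (1 - m) ≤ τ * (1 - xstar i) :=
      mul_le_mul_of_nonneg_left (by linarith) hτ.le
    calc xstar i / (τ * (1 - xstar i)) ≤ xstar i / (τ * (1 - m)) := by
          gcongr
          exact (hxpos i).1.le
      _ = c * xstar i := by rw [div_eq_mul_one_div, mul_comm, hc]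
  have specb := spec_abs_le A hpos xstar (fun i => (hxpos i).1) c hbound
  have hub : specRad A ≤ c :=
    Real.sSup_le (by rintro y ⟨μ, hμ, rfl⟩; exact specb μ hμ) hcpos.le
  -- Hermitian and nonzero
  set M := A.map Complex.ofReal with hM
  have hHerm : M.IsHermitian := by
    rw [Matrix.IsHermitian]
    ext i j
    simp only [hM, Matrix.conjTranspose_apply, Matrix.map_apply, RCLike.star_def,
      Complex.conj_ofReal, Complex.ofReal_inj]
    exact (congrFun (congrFun hs j) i).symm ▸ rfl
  have hMne : M ≠ 0 := by
    intro h0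
    have hA0 : ∀ i j, A i j = 0 := by
      intro i j
      have := congrFun (congrFun h0 i) j
      simpa [hM, Matrix.map_apply] using this
    have h1 : (0 : ℝ) < xstar i₀ / (τ * (1 - xstar i₀)) :=
      div_pos (hxpos i₀).1 (mul_pos hτ (by linarith [(hxpos i₀).2]))
    have h2 := hxeq i₀
    rw [Finset.sum_congr rfl (fun j _ => by rw [hA0 i₀ j, zero_mul]), Finset.sum_const,
      smul_zero] at h2
    linarith [h2 ▸ h1]
  obtain ⟨k, hk⟩ := herm_exists_eigenvalue_ne_zero hHerm hMne
  have hmem : ((hHerm.eigenvalues k : ℝ) : ℂ) ∈ spectrum ℂ M :=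
    spectrum.algebraMap_mem ℂ (hHerm.eigenvalues_mem_spectrum_real k)
  have hbdd : BddAbove ((fun z : ℂ => ‖z‖) '' spectrum ℂ M) := by
    refine ⟨c, ?_⟩
    rintro y ⟨μ, hμ, rfl⟩
    exact specb μ hμ
  have hlb : ‖((hHerm.eigenvalues k : ℝ) : ℂ)‖ ≤ specRad A :=
    le_csSup hbdd ⟨_, hmem, rfl⟩
  have hspos : 0 < specRad A := by
    refine lt_of_lt_of_le ?_ hlb
    rw [Complex.norm_real, Real.norm_eq_abs]
    exact abs_pos.mpr hk
  -- arithmetic finish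
  have h1 : 1 / (τ * c) = 1 - m := by
    rw [hc]
    field_simp
  have h2 : 1 / (τ * c) ≤ 1 / (τ * specRad A) :=
    one_div_le_one_div_of_le (mul_pos hτ hspos) (mul_le_mul_of_nonneg_left hub hτ.le)
  rw [h1] at h2
  linarith
end

section
/- If x* satisfies the single-virus SIS fixed point equations for (A, τ), where A is the adjacency matrix of a connected undirected graph on N ≥ 1 vertices and τ > 0, then the Rayleigh-quotient bound τ·λ(A) ≥ (Σ_{i=1}^N (x*_i)²/(1 − x*_i)) / (Σ_{i=1}^N (x*_i)²) holds. -/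
open Matrix Finset

/-- Any eigenvalue of a real Hermitian matrix is at most its spectral radius. -/
lemma eig_le_specRad {N : ℕ} (A : Matrix (Fin N) (Fin N) ℝ) (hA : A.IsHermitian) (i : Fin N) :
    hA.eigenvalues i ≤ specRad A := by
  set μ := hA.eigenvalues i with hμdef
  have hμ : μ ∈ spectrum ℝ A := hA.eigenvalues_mem_spectrum_real i
  have hmem : (μ : ℂ) ∈ spectrum ℂ (A.map Complex.ofReal) := by
    rw [spectrum.mem_iff] at hμ ⊢
    intro hunit
    apply hμ
    rw [Matrix.isUnit_iff_isUnit_det] at hunit ⊢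
    have heq : (algebraMap ℝ (Matrix (Fin N) (Fin N) ℝ) μ - A).map (Complex.ofRealHom : ℝ →+* ℂ)
        = algebraMap ℂ (Matrix (Fin N) (Fin N) ℂ) (μ : ℂ) - A.map Complex.ofReal := by
      ext j k
      simp [Matrix.algebraMap_matrix_apply, apply_ite Complex.ofReal]
    have hdet := (Complex.ofRealHom : ℝ →+* ℂ).map_det (algebraMap ℝ (Matrix (Fin N) (Fin N) ℝ) μ - A)
    rw [RingHom.mapMatrix_apply, heq] at hdet
    have : Complex.ofRealHom ((algebraMap ℝ (Matrix (Fin N) (Fin N) ℝ) μ - A).det) ≠ 0 := by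
      rw [hdet]; exact hunit.ne_zero
    exact isUnit_iff_ne_zero.mpr (by simpa using this)
  have hbdd : BddAbove ((fun z : ℂ => ‖z‖) '' spectrum ℂ (A.map Complex.ofReal)) :=
    ((Matrix.finite_spectrum _).image _).bddAbove
  calc μ ≤ |μ| := le_abs_self μ
    _ = ‖(μ : ℂ)‖ := by simp
    _ ≤ specRad A := le_csSup hbdd ⟨_, hmem, rfl⟩

/-- Rayleigh quotient bound for a real symmetric matrix. -/
lemma rayleigh_dot {N : ℕ} (A : Matrix (Fin N) (Fin N) ℝ) (hA : A.IsHermitian)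
    (x : Fin N → ℝ) :
    ∑ i, x i * (A *ᵥ x) i ≤ specRad A * ∑ i, x i * x i := by
  set b := hA.eigenvectorBasis with hb
  set x' : EuclideanSpace ℝ (Fin N) := WithLp.toLp 2 x with hx'
  set y' : EuclideanSpace ℝ (Fin N) := WithLp.toLp 2 (A *ᵥ x) with hy'
  have hinner : ∀ u v : EuclideanSpace ℝ (Fin N), (inner ℝ u v : ℝ) = ∑ i, u i * v i := by
    intro u v
    simp [PiLp.inner_apply, RCLike.inner_apply, mul_comm]
  have hATA : Aᵀ = A := by
    ext i j
    have := congrFun (congrFun hA i) j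
    simpa using this
  have hsym : ∀ k, (inner ℝ (b k) y' : ℝ) = hA.eigenvalues k * inner ℝ (b k) x' := by
    intro k
    have h1 : (inner ℝ (b k) y' : ℝ) = (⇑(b k)) ⬝ᵥ (A *ᵥ x) := by
      rw [hinner]; rfl
    have h2 : (⇑(b k)) ⬝ᵥ (A *ᵥ x) = (A *ᵥ ⇑(b k)) ⬝ᵥ x := by
      rw [Matrix.dotProduct_mulVec, ← Matrix.mulVec_transpose, hATA]
    have h3 : (A *ᵥ ⇑(b k)) ⬝ᵥ x = (hA.eigenvalues k • ⇑(b k)) ⬝ᵥ x := by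
      rw [hA.mulVec_eigenvectorBasis]
    rw [h1, h2, h3, smul_dotProduct]
    rw [hinner]
    rfl
  calc ∑ i, x i * (A *ᵥ x) i = (inner ℝ x' y' : ℝ) := (hinner x' y').symm
    _ = ∑ k, (inner ℝ x' (b k) : ℝ) * inner ℝ (b k) y' := (b.sum_inner_mul_inner x' y').symm
    _ = ∑ k, hA.eigenvalues k * ((inner ℝ x' (b k) : ℝ) * inner ℝ (b k) x') := by
        refine Finset.sum_congr rfl fun k _ => ?_
        rw [hsym k]; ring
    _ ≤ ∑ k, specRad A * ((inner ℝ x' (b k) : ℝ) * inner ℝ (b k) x') := by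
        refine Finset.sum_le_sum fun k _ => ?_
        have hnn : 0 ≤ (inner ℝ x' (b k) : ℝ) * inner ℝ (b k) x' := by
          rw [real_inner_comm x' (b k)]; exact mul_self_nonneg _
        exact mul_le_mul_of_nonneg_right (eig_le_specRad A hA k) hnn
    _ = specRad A * ∑ k, (inner ℝ x' (b k) : ℝ) * inner ℝ (b k) x' := by rw [Finset.mul_sum]
    _ = specRad A * (inner ℝ x' x' : ℝ) := by rw [b.sum_inner_mul_inner x' x']
    _ = specRad A * ∑ i, x i * x i := by rw [hinner]

/-- If `x*` satisfies the single-virus SIS fixed point equations for `(A, τ)`,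
where `A` is the adjacency matrix of a connected undirected graph on `N ≥ 1` vertices and
`τ > 0`, then the Rayleigh-quotient bound
`τ·λ(A) ≥ (Σ_i (x*_i)²/(1 − x*_i)) / (Σ_i (x*_i)²)` holds. -/
theorem rayleigh_quotient_bound {N : ℕ} (hN : 1 ≤ N)
    (A : Matrix (Fin N) (Fin N) ℝ) (hA : IsConnectedAdjMatrix A)
    (τ : ℝ) (hτ : 0 < τ)
    (xstar : Fin N → ℝ) (hx : IsSISFixedPoint A τ xstar) :
    (∑ i, (xstar i) ^ 2 / (1 - xstar i)) / (∑ i, (xstar i) ^ 2) ≤ τ * specRad A := by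
  obtain ⟨hpos, hfix⟩ := hx
  haveI : NeZero N := ⟨by omega⟩
  have hherm : A.IsHermitian := by
    ext i j
    have := congrFun (congrFun hA.1 i) j
    simpa using this
  have hS : 0 < ∑ i, xstar i ^ 2 :=
    Finset.sum_pos (fun i _ => pow_pos (hpos i).1 2) Finset.univ_nonempty
  have hQ : ∑ i, xstar i ^ 2 / (1 - xstar i) = τ * ∑ i, xstar i * (A *ᵥ xstar) i := by
    rw [Finset.mul_sum]
    refine Finset.sum_congr rfl fun i _ => ?_
    have h1 : (A *ᵥ xstar) i = ∑ j, A i j * xstar j := by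
      simp [Matrix.mulVec, dotProduct]
    rw [h1, hfix i]
    have h2 : (1 : ℝ) - xstar i ≠ 0 := by have := (hpos i).2; linarith
    field_simp
  have hR := rayleigh_dot A hherm xstar
  have hSS : ∑ i, xstar i * xstar i = ∑ i, xstar i ^ 2 := by
    refine Finset.sum_congr rfl fun i _ => (sq (xstar i)).symm
  rw [div_le_iff₀ hS, hQ]
  calc τ * ∑ i, xstar i * (A *ᵥ xstar) i
      ≤ τ * (specRad A * ∑ i, xstar i * xstar i) :=
        mul_le_mul_of_nonneg_left hR hτ.le
    _ = τ * specRad A * ∑ i, xstar i ^ 2 := by rw [hSS]; ring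
end

section
/- Let A and B be adjacency matrices of connected undirected graphs on the same N vertices, let τ₁, τ₂ > 0 satisfy τ₁·λ(A) > 1 and τ₂·λ(B) > 1, let x* satisfy the single-virus SIS fixed point equations for (A, τ₁) and y* the single-virus SIS fixed point equations for (B, τ₂), and suppose the coexistence conditions τ₁·λ(diag(1 − y*)·A) > 1 and τ₂·λ(diag(1 − x*)·B) > 1 hold. Then every coexistence equilibrium (x̂, ŷ) for (A, B, τ₁, τ₂) satisfies (1/N)·(Σ_i x̂_i + Σ_i ŷ_i) < 1 − 1/(τ₁·λ(A) + τ₂·λ(B) − 1). -/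
open Matrix Finset

/-- `(x, y)` is a coexistence equilibrium of the bi-SIS system for `(A, B, τ₁, τ₂)`. -/
def IsCoexistenceEq {N : ℕ} (A B : Matrix (Fin N) (Fin N) ℝ) (τ₁ τ₂ : ℝ)
    (x y : Fin N → ℝ) : Prop :=
  (∀ i, 0 < x i) ∧ (∀ i, 0 < y i) ∧ (∀ i, x i + y i < 1) ∧
    (∀ i, ∑ j, A i j * x j = x i / (τ₁ * (1 - x i - y i))) ∧
    (∀ i, ∑ j, B i j * y j = y i / (τ₂ * (1 - x i - y i)))

set_option maxHeartbeats 1000000 in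
lemma specRad_dim_zero (M : Matrix (Fin 0) (Fin 0) ℝ) : specRad M = 0 := by
  haveI : Subsingleton (Matrix (Fin 0) (Fin 0) ℂ) := ⟨fun a b => by ext i j; exact i.elim0⟩
  have h : spectrum ℂ (M.map Complex.ofReal) = ∅ := by
    ext z
    simp only [Set.mem_empty_iff_false, iff_false, spectrum.mem_iff, not_not]
    exact isUnit_of_subsingleton _
  unfold specRad
  rw [h, Set.image_empty, Real.sSup_empty]


set_option maxHeartbeats 1000000 in
lemma abs_eig_le_specRad {N : ℕ} {M : Matrix (Fin N) (Fin N) ℝ} (hH : M.IsHermitian)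
    (k : Fin N) : |hH.eigenvalues k| ≤ specRad M := by
  classical
  set M' : Matrix (Fin N) (Fin N) ℂ := M.map Complex.ofReal with hM'
  set μ := hH.eigenvalues k with hμ
  have hb : M *ᵥ ⇑(hH.eigenvectorBasis k) = μ • ⇑(hH.eigenvectorBasis k) :=
    hH.mulVec_eigenvectorBasis k
  set b : Fin N → ℝ := ⇑(hH.eigenvectorBasis k) with hbdef
  have hbne : b ≠ 0 := by
    intro h
    exact hH.eigenvectorBasis.orthonormal.ne_zero k (by ext i; exact congrFun h i)
  set w : Fin N → ℂ := fun i => (b i : ℂ) with hwdef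
  have hw : M' *ᵥ w = (μ : ℂ) • w := by
    funext i
    have h := congrFun hb i
    simp only [mulVec, dotProduct, Pi.smul_apply, smul_eq_mul] at h ⊢
    simp only [hM', Matrix.map_apply, hwdef]
    exact_mod_cast h
  have hwne : w ≠ 0 := by
    obtain ⟨i, hi⟩ := Function.ne_iff.mp hbne
    intro h
    apply hi
    have hz : (b i : ℂ) = 0 := by simpa [hwdef] using congrFun h i
    rw [Pi.zero_apply]
    exact_mod_cast hz
  have heig : Module.End.HasEigenvalue (Matrix.toLin' M') (μ : ℂ) :=
    Module.End.hasEigenvalue_of_hasEigenvector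
      ⟨Module.End.mem_eigenspace_iff.mpr (by rw [Matrix.toLin'_apply]; exact hw), hwne⟩
  have hmem : (μ : ℂ) ∈ spectrum ℂ M' := by
    rw [← AlgEquiv.spectrum_eq
      (Matrix.toLinAlgEquiv' : Matrix (Fin N) (Fin N) ℂ ≃ₐ[ℂ] _) M']
    exact Module.End.hasEigenvalue_iff_mem_spectrum.mp heig
  have hbdd : BddAbove ((fun z : ℂ => ‖z‖) '' spectrum ℂ M') :=
    ((M'.finite_spectrum).image _).bddAbove
  have hle : ‖(μ : ℂ)‖ ≤ specRad M :=
    le_csSup hbdd ⟨(μ : ℂ), hmem, rfl⟩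
  simpa using hle


set_option maxHeartbeats 1000000 in
lemma rayleigh {N : ℕ} {M : Matrix (Fin N) (Fin N) ℝ} (hs : M.IsSymm) (v : Fin N → ℝ) :
    v ⬝ᵥ (M *ᵥ v) ≤ specRad M * (v ⬝ᵥ v) := by
  classical
  have hH : M.IsHermitian := by
    rw [Matrix.IsHermitian]
    ext i j
    rw [Matrix.conjTranspose_apply, star_trivial]
    exact hs.apply i j
  set U : Matrix (Fin N) (Fin N) ℝ := ↑(hH.eigenvectorUnitary) with hU
  have hUunit : U * star U = 1 := Matrix.mem_unitaryGroup_iff.mp hH.eigenvectorUnitary.2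
  set d : Fin N → ℝ := hH.eigenvalues with hd
  have hDef : M = U * Matrix.diagonal d * star U := by
    have h := hH.spectral_theorem
    rwa [RCLike.ofReal_real_eq_id, Function.id_comp] at h
  set w : Fin N → ℝ := star U *ᵥ v with hw
  have hsU : star U = Uᵀ := by
    ext i j; simp [Matrix.star_apply]
  have hvw : ∀ t, v ⬝ᵥ (U *ᵥ t) = w ⬝ᵥ t := by
    intro t
    rw [Matrix.dotProduct_mulVec]
    congr 1
    rw [hw, hsU, Matrix.mulVec_transpose]
  have h1 : v ⬝ᵥ (M *ᵥ v) = ∑ k, d k * (w k) ^ 2 := by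
    rw [hDef, ← Matrix.mulVec_mulVec, ← Matrix.mulVec_mulVec, hvw, ← hw]
    simp only [dotProduct, Matrix.mulVec_diagonal]
    exact Finset.sum_congr rfl fun k _ => by ring
  have h2 : v ⬝ᵥ v = ∑ k, (w k) ^ 2 := by
    have h0 : v ⬝ᵥ v = v ⬝ᵥ ((U * star U) *ᵥ v) := by rw [hUunit, Matrix.one_mulVec]
    rw [h0, ← Matrix.mulVec_mulVec, hvw, ← hw]
    simp only [dotProduct]
    exact Finset.sum_congr rfl fun k _ => by ring
  rw [h1, h2, Finset.mul_sum]
  refine Finset.sum_le_sum fun k _ => ?_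
  have h := abs_eig_le_specRad hH k
  have : d k ≤ specRad M := (le_abs_self _).trans h
  nlinarith [sq_nonneg (w k)]

set_option maxHeartbeats 1000000 in
/-- **Proposition 2.** Under the single-virus survival conditions
`τ₁·λ(A) > 1`, `τ₂·λ(B) > 1` and the coexistence conditions
`τ₁·λ(diag(1 − y*)·A) > 1`, `τ₂·λ(diag(1 − x*)·B) > 1`, every coexistence equilibrium
`(x̂, ŷ)` for `(A, B, τ₁, τ₂)` satisfies
`(1/N)·(Σ_i x̂_i + Σ_i ŷ_i) < 1 − 1/(τ₁·λ(A) + τ₂·λ(B) − 1)`. -/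
theorem coexistence_average_bound {N : ℕ}
    (A B : Matrix (Fin N) (Fin N) ℝ) (hA : IsConnectedAdjMatrix A) (hB : IsConnectedAdjMatrix B)
    (τ₁ τ₂ : ℝ) (hτ₁ : 0 < τ₁) (hτ₂ : 0 < τ₂)
    (hA1 : 1 < τ₁ * specRad A) (hB1 : 1 < τ₂ * specRad B)
    (xstar ystar : Fin N → ℝ)
    (hxs : IsSISFixedPoint A τ₁ xstar) (hys : IsSISFixedPoint B τ₂ ystar)
    (hcoex1 : 1 < τ₁ * specRad (Matrix.diagonal (fun i => 1 - ystar i) * A))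
    (hcoex2 : 1 < τ₂ * specRad (Matrix.diagonal (fun i => 1 - xstar i) * B))
    (xhat yhat : Fin N → ℝ)
    (hce : IsCoexistenceEq A B τ₁ τ₂ xhat yhat) :
    (1 / (N : ℝ)) * ((∑ i, xhat i) + ∑ i, yhat i) <
      1 - 1 / (τ₁ * specRad A + τ₂ * specRad B - 1) := by
  obtain ⟨hx, hy, hxy, heqx, heqy⟩ := hce
  have hAs : A.IsSymm := hA.1
  have hBs : B.IsSymm := hB.1
  rcases Nat.eq_zero_or_pos N with hN | hN
  · exfalso
    subst hN
    rw [specRad_dim_zero] at hA1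
    linarith
  have hNpos : (0 : ℝ) < N := by exact_mod_cast hN
  haveI : Nonempty (Fin N) := Fin.pos_iff_nonempty.mp hN
  set α := τ₁ * specRad A with hαdef
  set β := τ₂ * specRad B with hβdef
  have hα : 1 < α := hA1
  have hβ : 1 < β := hB1
  set u : Fin N → ℝ := fun i => 1 - xhat i - yhat i with hudef
  have hu0 : ∀ i, 0 < u i := fun i => by have := hxy i; simp only [hudef]; linarith
  have hu1 : ∀ i, u i < 1 := fun i => by
    have h1 := hx i; have h2 := hy i; simp only [hudef]; linarith
  set c : Fin N → ℝ := fun i => (1 - u i) / u i with hcdef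
  have hc0 : ∀ i, 0 ≤ c i := fun i => div_nonneg (by linarith [hu1 i]) (hu0 i).le
  have hc1 : ∀ i, u i * (1 + c i) = 1 := fun i => by
    have := hu0 i; simp only [hcdef]; rw [mul_add, mul_div_assoc', mul_comm (u i) (1 - u i), mul_div_assoc, div_self this.ne']; ring
  have hτSx : ∀ i, τ₁ * (∑ j, A i j * xhat j) = xhat i * (1 + c i) := by
    intro i
    have h := heqx i
    have hu := hu0 i
    have hui : (1 : ℝ) - xhat i - yhat i = u i := rfl
    rw [hui] at h
    rw [h, hcdef]
    field_simp
    ring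
  have hτSy : ∀ i, τ₂ * (∑ j, B i j * yhat j) = yhat i * (1 + c i) := by
    intro i
    have h := heqy i
    have hu := hu0 i
    have hui : (1 : ℝ) - xhat i - yhat i = u i := rfl
    rw [hui] at h
    rw [h, hcdef]
    field_simp
    ring
  -- Rayleigh consequences
  have hp : ∑ i, xhat i ^ 2 * (1 + c i) ≤ α * ∑ i, xhat i ^ 2 := by
    have hRx := rayleigh hAs xhat
    have e1 : ∑ i, xhat i ^ 2 * (1 + c i) = τ₁ * (xhat ⬝ᵥ (A *ᵥ xhat)) := by
      simp only [dotProduct, Matrix.mulVec]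
      rw [Finset.mul_sum]
      refine Finset.sum_congr rfl fun i _ => ?_
      calc xhat i ^ 2 * (1 + c i) = xhat i * (xhat i * (1 + c i)) := by ring
        _ = xhat i * (τ₁ * ∑ j, A i j * xhat j) := by rw [hτSx i]
        _ = τ₁ * (xhat i * ∑ j, A i j * xhat j) := by ring
    have e2 : xhat ⬝ᵥ xhat = ∑ i, xhat i ^ 2 := by
      simp only [dotProduct]
      exact Finset.sum_congr rfl fun i _ => (pow_two (xhat i)).symm
    rw [e1]
    calc τ₁ * (xhat ⬝ᵥ (A *ᵥ xhat)) ≤ τ₁ * (specRad A * (xhat ⬝ᵥ xhat)) :=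
          mul_le_mul_of_nonneg_left (hRx) hτ₁.le
      _ = α * ∑ i, xhat i ^ 2 := by rw [e2, hαdef]; ring
  have hq : ∑ i, yhat i ^ 2 * (1 + c i) ≤ β * ∑ i, yhat i ^ 2 := by
    have hRy := rayleigh hBs yhat
    have e1 : ∑ i, yhat i ^ 2 * (1 + c i) = τ₂ * (yhat ⬝ᵥ (B *ᵥ yhat)) := by
      simp only [dotProduct, Matrix.mulVec]
      rw [Finset.mul_sum]
      refine Finset.sum_congr rfl fun i _ => ?_
      calc yhat i ^ 2 * (1 + c i) = yhat i * (yhat i * (1 + c i)) := by ring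
        _ = yhat i * (τ₂ * ∑ j, B i j * yhat j) := by rw [hτSy i]
        _ = τ₂ * (yhat i * ∑ j, B i j * yhat j) := by ring
    have e2 : yhat ⬝ᵥ yhat = ∑ i, yhat i ^ 2 := by
      simp only [dotProduct]
      exact Finset.sum_congr rfl fun i _ => (pow_two (yhat i)).symm
    rw [e1]
    calc τ₂ * (yhat ⬝ᵥ (B *ᵥ yhat)) ≤ τ₂ * (specRad B * (yhat ⬝ᵥ yhat)) :=
          mul_le_mul_of_nonneg_left (hRy) hτ₂.le
      _ = β * ∑ i, yhat i ^ 2 := by rw [e2, hβdef]; ring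
  have hPnn : (0:ℝ) ≤ ∑ i, xhat i ^ 2 := Finset.sum_nonneg fun i _ => sq_nonneg _
  have hQnn : (0:ℝ) ≤ ∑ i, yhat i ^ 2 := Finset.sum_nonneg fun i _ => sq_nonneg _
  have hp'nn : (0:ℝ) ≤ ∑ i, xhat i ^ 2 * c i :=
    Finset.sum_nonneg fun i _ => mul_nonneg (sq_nonneg _) (hc0 i)
  have hq'nn : (0:ℝ) ≤ ∑ i, yhat i ^ 2 * c i :=
    Finset.sum_nonneg fun i _ => mul_nonneg (sq_nonneg _) (hc0 i)
  have hp' : ∑ i, xhat i ^ 2 * c i ≤ (α - 1) * ∑ i, xhat i ^ 2 := by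
    have hsplit : ∑ i, xhat i ^ 2 * (1 + c i) = (∑ i, xhat i ^ 2) + ∑ i, xhat i ^ 2 * c i := by
      rw [← Finset.sum_add_distrib]
      exact Finset.sum_congr rfl fun i _ => by ring
    nlinarith [hp]
  have hq' : ∑ i, yhat i ^ 2 * c i ≤ (β - 1) * ∑ i, yhat i ^ 2 := by
    have hsplit : ∑ i, yhat i ^ 2 * (1 + c i) = (∑ i, yhat i ^ 2) + ∑ i, yhat i ^ 2 * c i := by
      rw [← Finset.sum_add_distrib]
      exact Finset.sum_congr rfl fun i _ => by ring
    nlinarith [hq]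
  have hr2 : (∑ i, xhat i * yhat i * c i) ^ 2
      ≤ (∑ i, xhat i ^ 2 * c i) * (∑ i, yhat i ^ 2 * c i) := by
    have h := Finset.sum_mul_sq_le_sq_mul_sq Finset.univ
      (fun i => xhat i * Real.sqrt (c i)) (fun i => yhat i * Real.sqrt (c i))
    have e1 : ∑ i, (xhat i * Real.sqrt (c i)) * (yhat i * Real.sqrt (c i))
        = ∑ i, xhat i * yhat i * c i :=
      Finset.sum_congr rfl fun i _ => by
        calc (xhat i * Real.sqrt (c i)) * (yhat i * Real.sqrt (c i))
            = xhat i * yhat i * (Real.sqrt (c i) * Real.sqrt (c i)) := by ring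
          _ = xhat i * yhat i * c i := by rw [Real.mul_self_sqrt (hc0 i)]
    have e2 : ∑ i, (xhat i * Real.sqrt (c i)) ^ 2 = ∑ i, xhat i ^ 2 * c i :=
      Finset.sum_congr rfl fun i _ => by rw [mul_pow, Real.sq_sqrt (hc0 i)]
    have e3 : ∑ i, (yhat i * Real.sqrt (c i)) ^ 2 = ∑ i, yhat i ^ 2 * c i :=
      Finset.sum_congr rfl fun i _ => by rw [mul_pow, Real.sq_sqrt (hc0 i)]
    rw [e1, e2, e3] at h
    exact h
  have hrnn : (0:ℝ) ≤ ∑ i, xhat i * yhat i * c i :=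
    Finset.sum_nonneg fun i _ =>
      mul_nonneg (mul_nonneg (hx i).le (hy i).le) (hc0 i)
  have h2r : 2 * (∑ i, xhat i * yhat i * c i)
      ≤ (β - 1) * (∑ i, xhat i ^ 2) + (α - 1) * (∑ i, yhat i ^ 2) := by
    have hpq : (∑ i, xhat i ^ 2 * c i) * (∑ i, yhat i ^ 2 * c i)
        ≤ ((α - 1) * ∑ i, xhat i ^ 2) * ((β - 1) * ∑ i, yhat i ^ 2) :=
      mul_le_mul hp' hq' hq'nn (by nlinarith)
    have ht : (0:ℝ) ≤ (β - 1) * (∑ i, xhat i ^ 2) + (α - 1) * (∑ i, yhat i ^ 2) := by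
      nlinarith
    nlinarith [hr2, hpq, hrnn, ht,
      sq_nonneg ((β - 1) * (∑ i, xhat i ^ 2) - (α - 1) * (∑ i, yhat i ^ 2))]
  have hRtpos : (0:ℝ) < ∑ i, xhat i * yhat i :=
    Finset.sum_pos (fun i _ => mul_pos (hx i) (hy i)) Finset.univ_nonempty
  set P := ∑ i, xhat i ^ 2 with hPdef
  set Q := ∑ i, yhat i ^ 2 with hQdef
  set Rt := ∑ i, xhat i * yhat i with hRtdef
  set p' := ∑ i, xhat i ^ 2 * c i with hp'def
  set q' := ∑ i, yhat i ^ 2 * c i with hq'def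
  set r := ∑ i, xhat i * yhat i * c i with hrdef
  set S1 := ∑ i, xhat i ^ 2 * (1 + c i) with hS1def
  set S2 := ∑ i, yhat i ^ 2 * (1 + c i) with hS2def
  have hLsplit : ∑ i, (xhat i + yhat i) ^ 2 * (1 + c i)
      = (∑ i, xhat i ^ 2 * (1 + c i)) + (∑ i, yhat i ^ 2 * (1 + c i))
        + 2 * (∑ i, xhat i * yhat i) + 2 * (∑ i, xhat i * yhat i * c i) := by
    rw [Finset.mul_sum, Finset.mul_sum, ← Finset.sum_add_distrib, ← Finset.sum_add_distrib,
      ← Finset.sum_add_distrib]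
    exact Finset.sum_congr rfl fun i _ => by ring
  have hZ : ∑ i, (xhat i + yhat i) ^ 2
      = (∑ i, xhat i ^ 2) + (∑ i, yhat i ^ 2) + 2 * (∑ i, xhat i * yhat i) := by
    rw [Finset.mul_sum, ← Finset.sum_add_distrib, ← Finset.sum_add_distrib]
    exact Finset.sum_congr rfl fun i _ => by ring
  have hkey : ∑ i, (xhat i + yhat i) ^ 2 * (1 + c i)
      < (α + β - 1) * ∑ i, (xhat i + yhat i) ^ 2 := by
    rw [hLsplit, hZ]
    nlinarith [hp, hq, h2r, mul_pos (show (0:ℝ) < α + β - 2 by linarith) hRtpos]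
  have hmono : Monovary (fun i => (xhat i + yhat i) ^ 2) (fun i => 1 + c i) := by
    intro i j hij
    simp only at hij ⊢
    have hci : c i < c j := by linarith
    have huji : u j < u i := by
      have hd := (div_lt_div_iff₀ (hu0 i) (hu0 j)).mp (by simpa [hcdef] using hci)
      nlinarith
    have e1 : xhat i + yhat i = 1 - u i := by simp only [hudef]; ring
    have e2 : xhat j + yhat j = 1 - u j := by simp only [hudef]; ring
    have hzij : xhat i + yhat i ≤ xhat j + yhat j := by rw [e1, e2]; linarith
    have h0 : 0 ≤ xhat i + yhat i := by have := hx i; have := hy i; linarith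
    exact pow_le_pow_left₀ h0 hzij 2
  have hcheb := hmono.sum_mul_sum_le_card_mul_sum
  simp only [Fintype.card_fin] at hcheb
  have hz2pos : (0:ℝ) < ∑ i, (xhat i + yhat i) ^ 2 :=
    Finset.sum_pos (fun i _ => pow_pos (add_pos (hx i) (hy i)) 2) Finset.univ_nonempty
  have hgsum : ∑ i, (1 + c i) < N * (α + β - 1) := by
    have h1 : (∑ i, (xhat i + yhat i) ^ 2) * (∑ i, (1 + c i))
        < (∑ i, (xhat i + yhat i) ^ 2) * (N * (α + β - 1)) := by
      calc (∑ i, (xhat i + yhat i) ^ 2) * (∑ i, (1 + c i))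
          ≤ N * ∑ i, (xhat i + yhat i) ^ 2 * (1 + c i) := hcheb
        _ < N * ((α + β - 1) * ∑ i, (xhat i + yhat i) ^ 2) :=
            mul_lt_mul_of_pos_left hkey hNpos
        _ = (∑ i, (xhat i + yhat i) ^ 2) * (N * (α + β - 1)) := by ring
    exact lt_of_mul_lt_mul_left h1 hz2pos.le
  have hg1 : ∀ i, (0:ℝ) ≤ 1 + c i := fun i => by linarith [hc0 i]
  have hCS2 : (N : ℝ) ^ 2 ≤ (∑ i, u i) * (∑ i, (1 + c i)) := by
    have h := Finset.sum_mul_sq_le_sq_mul_sq Finset.univ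
      (fun i => Real.sqrt (u i)) (fun i => Real.sqrt (1 + c i))
    have e1 : ∑ i, Real.sqrt (u i) * Real.sqrt (1 + c i) = ∑ i : Fin N, (1:ℝ) :=
      Finset.sum_congr rfl fun i _ => by
        rw [← Real.sqrt_mul (hu0 i).le, hc1 i, Real.sqrt_one]
    have e2 : ∑ i, Real.sqrt (u i) ^ 2 = ∑ i, u i :=
      Finset.sum_congr rfl fun i _ => Real.sq_sqrt (hu0 i).le
    have e3 : ∑ i, Real.sqrt (1 + c i) ^ 2 = ∑ i, (1 + c i) :=
      Finset.sum_congr rfl fun i _ => Real.sq_sqrt (hg1 i)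
    rw [e1, e2, e3] at h
    simpa using h
  have hupos : (0:ℝ) < ∑ i, u i := Finset.sum_pos (fun i _ => hu0 i) Finset.univ_nonempty
  have husum : (N : ℝ) < (∑ i, u i) * (α + β - 1) := by
    have h2 : (N:ℝ) ^ 2 < (∑ i, u i) * (N * (α + β - 1)) :=
      lt_of_le_of_lt hCS2 (mul_lt_mul_of_pos_left hgsum hupos)
    nlinarith [hNpos]
  have hU : ∑ i, u i = (N:ℝ) - ((∑ i, xhat i) + ∑ i, yhat i) := by
    simp only [hudef]
    rw [Finset.sum_sub_distrib, Finset.sum_sub_distrib, Finset.sum_const, Finset.card_univ,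
      Fintype.card_fin, nsmul_eq_mul, mul_one]
    ring
  have hs1 : (0:ℝ) < α + β - 1 := by linarith
  have h3 : 1 / (α + β - 1) < (∑ i, u i) / N := by
    rw [div_lt_div_iff₀ hs1 hNpos]
    linarith
  have h4 : (1 / (N:ℝ)) * ((∑ i, xhat i) + ∑ i, yhat i) = 1 - (∑ i, u i) / N := by
    rw [hU]; field_simp; ring
  rw [h4]
  linarith
end

section
/- Let A and B be adjacency matrices of connected undirected graphs on the same N vertices, let τ₁, τ₂ > 0, let x* satisfy the single-virus SIS fixed point equations for (A, τ₁) and y* the single-virus SIS fixed point equations for (B, τ₂), and let (x̂, ŷ) be a coexistence equilibrium for (A, B, τ₁, τ₂) that additionally satisfies x̂_i < x*_i·(1 − ŷ_i) and ŷ_i < y*_i·(1 − x̂_i) for every i. Then (1/N)·(Σ_i x̂_i + Σ_i ŷ_i) < 1 − 1/(τ₁·λ(A) + τ₂·λ(B) − 1). -/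
open Matrix Finset

lemma spec_transfer {N : ℕ} (A : Matrix (Fin N) (Fin N) ℝ) {r : ℝ}
    (h : r ∈ spectrum ℝ A) : (r : ℂ) ∈ spectrum ℂ (A.map Complex.ofReal) := by
  rw [spectrum.mem_iff] at h ⊢
  intro hu
  apply h
  rw [Matrix.isUnit_iff_isUnit_det] at hu ⊢
  have key : (algebraMap ℝ (Matrix (Fin N) (Fin N) ℝ) r - A).map Complex.ofReal
      = algebraMap ℂ (Matrix (Fin N) (Fin N) ℂ) (r : ℂ) - A.map Complex.ofReal := by
    ext i j
    simp [Matrix.algebraMap_matrix_apply, Matrix.map_apply, apply_ite]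
  have hdet := RingHom.map_det (Complex.ofRealHom) (algebraMap ℝ (Matrix (Fin N) (Fin N) ℝ) r - A)
  rw [RingHom.mapMatrix_apply] at hdet
  rw [isUnit_iff_ne_zero]
  rw [isUnit_iff_ne_zero] at hu
  intro h0
  apply hu
  have h2 : ((algebraMap ℝ (Matrix (Fin N) (Fin N) ℝ) r - A).map Complex.ofReal).det = 0 := by
    rw [show (Complex.ofReal : ℝ → ℂ) = ⇑Complex.ofRealHom from rfl, ← hdet] at *
    simp [h0]
  rw [key] at h2
  exact h2
lemma eigenvalue_le_specRad {N : ℕ} {A : Matrix (Fin N) (Fin N) ℝ}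
    (hA : A.IsHermitian) (i : Fin N) : hA.eigenvalues i ≤ specRad A := by
  have hmem : ((hA.eigenvalues i : ℝ) : ℂ) ∈ spectrum ℂ (A.map Complex.ofReal) :=
    spec_transfer A (hA.eigenvalues_mem_spectrum_real i)
  have hfin : ((fun z : ℂ => ‖z‖) '' spectrum ℂ (A.map Complex.ofReal)).Finite :=
    (Matrix.finite_spectrum _).image _
  have hb : BddAbove ((fun z : ℂ => ‖z‖) '' spectrum ℂ (A.map Complex.ofReal)) :=
    hfin.bddAbove
  calc hA.eigenvalues i ≤ |hA.eigenvalues i| := le_abs_self _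
    _ = ‖((hA.eigenvalues i : ℝ) : ℂ)‖ := by simp
    _ ≤ specRad A := le_csSup hb ⟨_, hmem, rfl⟩
lemma rayleigh_le_specRad {N : ℕ} {A : Matrix (Fin N) (Fin N) ℝ}
    (hA : A.IsHermitian) (z : Fin N → ℝ) :
    z ⬝ᵥ (A *ᵥ z) ≤ specRad A * (z ⬝ᵥ z) := by
  classical
  set V : Matrix (Fin N) (Fin N) ℝ := (hA.eigenvectorUnitary : Matrix (Fin N) (Fin N) ℝ)
  set μ : Fin N → ℝ := hA.eigenvalues
  have hdecomp : A = V * diagonal (RCLike.ofReal ∘ μ) * star V := hA.spectral_theorem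
  have hμ : (RCLike.ofReal ∘ μ : Fin N → ℝ) = μ := by ext k; simp [RCLike.ofReal]
  set w : Fin N → ℝ := star V *ᵥ z with hw
  have hvm : vecMul z V = w := by
    rw [hw, Matrix.star_eq_conjTranspose, Matrix.conjTranspose_eq_transpose_of_trivial,
      Matrix.mulVec_transpose]
  have h1 : z ⬝ᵥ (A *ᵥ z) = ∑ k, μ k * (w k * w k) := by
    rw [hdecomp, ← Matrix.mulVec_mulVec, ← Matrix.mulVec_mulVec, Matrix.dotProduct_mulVec, hvm]
    rw [hμ]
    simp [Matrix.mulVec_diagonal, dotProduct, mul_comm, mul_assoc, mul_left_comm]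
    rfl
  have h2 : z ⬝ᵥ z = ∑ k, w k * w k := by
    have e1 : z ⬝ᵥ z = z ⬝ᵥ ((V * star V) *ᵥ z) := by
      rw [show (V * star V) = 1 from Unitary.mul_star_self_of_mem hA.eigenvectorUnitary.2,
        Matrix.one_mulVec]
    rw [e1, ← Matrix.mulVec_mulVec, Matrix.dotProduct_mulVec, hvm]
    rfl
  rw [h1, h2, Finset.mul_sum]
  apply Finset.sum_le_sum
  intro k _
  exact mul_le_mul_of_nonneg_right (eigenvalue_le_specRad hA k) (mul_self_nonneg _)
lemma sum_inv_one_sub_le {N : ℕ} {A : Matrix (Fin N) (Fin N) ℝ} (hA : A.IsHermitian)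
    {τ : ℝ} (hτ : 0 < τ) {x : Fin N → ℝ} (hx : ∀ i, 0 < x i ∧ x i < 1)
    (heq : ∀ i, ∑ j, A i j * x j = x i / (τ * (1 - x i))) (hN : 0 < N) :
    ∑ i, 1 / (1 - x i) ≤ (N : ℝ) * (τ * specRad A) := by
  have hpos : ∀ i, 0 < 1 - x i := fun i => by linarith [(hx i).2]
  have key : ∀ i, τ * ∑ j, A i j * x j = x i / (1 - x i) := by
    intro i
    rw [heq i, ← mul_div_assoc, mul_div_mul_left _ _ hτ.ne']
  have hmono : Monovary (fun i => x i ^ 2) (fun i => 1 / (1 - x i)) := by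
    intro i j hlt
    have hxij : x i < x j := by
      have h2 := (div_lt_div_iff₀ (hpos i) (hpos j)).mp hlt
      nlinarith
    exact pow_le_pow_left₀ (hx i).1.le hxij.le 2
  have cheb := hmono.sum_mul_sum_le_card_mul_sum
  rw [Fintype.card_fin] at cheb
  have sumeq : ∑ i, x i ^ 2 * (1 / (1 - x i)) = τ * (x ⬝ᵥ (A *ᵥ x)) := by
    rw [dotProduct, Finset.mul_sum]
    apply Finset.sum_congr rfl
    intro i _
    have : (A *ᵥ x) i = ∑ j, A i j * x j := rfl
    rw [this]
    have h2 : x i * (τ * ∑ j, A i j * x j) = x i * (x i / (1 - x i)) := by rw [key i]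
    have hne := (hpos i).ne'
    field_simp at h2 ⊢
    linarith [h2]
  have hray := rayleigh_le_specRad hA x
  have hdot : x ⬝ᵥ x = ∑ i, x i ^ 2 := by
    simp [dotProduct, sq]
  haveI : Nonempty (Fin N) := Fin.pos_iff_nonempty.mp hN
  have hx2pos : 0 < ∑ i, x i ^ 2 := by
    apply Finset.sum_pos
    · intro i _; exact pow_pos (hx i).1 2
    · exact Finset.univ_nonempty
  have chain : (∑ i, x i ^ 2) * (∑ i, 1 / (1 - x i))
      ≤ ((N : ℝ) * (τ * specRad A)) * (∑ i, x i ^ 2) := by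
    calc (∑ i, x i ^ 2) * (∑ i, 1 / (1 - x i))
        ≤ (N : ℝ) * ∑ i, x i ^ 2 * (1 / (1 - x i)) := cheb
      _ = (N : ℝ) * (τ * (x ⬝ᵥ (A *ᵥ x))) := by rw [sumeq]
      _ ≤ (N : ℝ) * (τ * (specRad A * ∑ i, x i ^ 2)) := by
          apply mul_le_mul_of_nonneg_left _ (by positivity)
          apply mul_le_mul_of_nonneg_left _ hτ.le
          rw [← hdot]
          exact hray
      _ = ((N : ℝ) * (τ * specRad A)) * (∑ i, x i ^ 2) := by ring
  have chain2 : (∑ i, 1 / (1 - x i)) * (∑ i, x i ^ 2)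
      ≤ ((N : ℝ) * (τ * specRad A)) * (∑ i, x i ^ 2) := by
    rw [mul_comm]; exact chain
  exact le_of_mul_le_mul_right chain2 hx2pos
lemma row_pos {N : ℕ} {A : Matrix (Fin N) (Fin N) ℝ} (hA : IsConnectedAdjMatrix A)
    (hN : 2 ≤ N) (i : Fin N) : ∃ l, 0 < A i l := by
  by_contra h
  push_neg at h
  have hz : ∀ l, A i l = 0 := by
    intro l
    rcases hA.2.1 i l with h0 | h1
    · exact h0
    · exact absurd (h1 ▸ h l) (by norm_num)
  obtain ⟨j, hj⟩ := Fintype.exists_ne_of_one_lt_card (by simp; omega) i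
  obtain ⟨k, hk⟩ := hA.2.2.2 i j (Ne.symm hj)
  have hzero : ∀ m : ℕ, (A ^ m) i j = 0 := by
    intro m
    cases m with
    | zero => simp [Matrix.one_apply_ne (Ne.symm hj)]
    | succ m =>
      rw [pow_succ', Matrix.mul_apply]
      simp [hz]
  rw [hzero k] at hk
  exact lt_irrefl 0 hk
lemma specRad_zero : specRad (0 : Matrix (Fin 0) (Fin 0) ℝ) = 0 := by
  have : spectrum ℂ ((0 : Matrix (Fin 0) (Fin 0) ℝ).map Complex.ofReal) = ∅ := by
    ext z
    simp [spectrum.mem_iff, isUnit_of_subsingleton]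
  rw [specRad, this]
  simp [Real.sSup_empty]

/-- Let `A` and `B` be adjacency matrices of connected undirected graphs on
the same `N` vertices, let `τ₁, τ₂ > 0`, let `x*` satisfy the single-virus SIS fixed point
equations for `(A, τ₁)` and `y*` those for `(B, τ₂)`, and let `(x̂, ŷ)` be a coexistence
equilibrium for `(A, B, τ₁, τ₂)` that additionally satisfies `x̂_i < x*_i·(1 − ŷ_i)` and
`ŷ_i < y*_i·(1 − x̂_i)` for every `i`. Then
`(1/N)·(Σ_i x̂_i + Σ_i ŷ_i) < 1 − 1/(τ₁·λ(A) + τ₂·λ(B) − 1)`. -/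
theorem coexistence_average_bound_of_pointwise {N : ℕ}
    (A B : Matrix (Fin N) (Fin N) ℝ) (hA : IsConnectedAdjMatrix A) (hB : IsConnectedAdjMatrix B)
    (τ₁ τ₂ : ℝ) (hτ₁ : 0 < τ₁) (hτ₂ : 0 < τ₂)
    (xstar ystar : Fin N → ℝ)
    (hxs : IsSISFixedPoint A τ₁ xstar) (hys : IsSISFixedPoint B τ₂ ystar)
    (xhat yhat : Fin N → ℝ)
    (hce : IsCoexistenceEq A B τ₁ τ₂ xhat yhat)
    (hpx : ∀ i, xhat i < xstar i * (1 - yhat i))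
    (hpy : ∀ i, yhat i < ystar i * (1 - xhat i)) :
    (1 / (N : ℝ)) * ((∑ i, xhat i) + ∑ i, yhat i) <
      1 - 1 / (τ₁ * specRad A + τ₂ * specRad B - 1) := by
  classical
  obtain ⟨hxsb, hxse⟩ := hxs
  obtain ⟨hysb, hyse⟩ := hys
  obtain ⟨hx0, hy0, hs1, heqA, heqB⟩ := hce
  -- trivial case N = 0
  rcases Nat.eq_zero_or_pos N with h0 | hNpos
  · subst h0
    have hA0 : A = 0 := Subsingleton.elim _ _
    have hB0 : B = 0 := Subsingleton.elim _ _
    rw [hA0, hB0, specRad_zero]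
    simp
  -- case N = 1 : contradiction
  rcases Nat.lt_or_ge N 2 with hN1 | hN2
  · exfalso
    have hN : N = 1 := by omega
    subst hN
    have h := hxse 0
    rw [Fin.sum_univ_one, hA.2.2.1 0] at h
    have hpos : 0 < xstar 0 / (τ₁ * (1 - xstar 0)) := by
      apply div_pos (hxsb 0).1
      exact mul_pos hτ₁ (by linarith [(hxsb 0).2])
    rw [← h] at hpos
    simp at hpos
  -- main case
  haveI : Nonempty (Fin N) := Fin.pos_iff_nonempty.mp hNpos
  have hAH : A.IsHermitian := by
    rw [Matrix.IsHermitian, Matrix.conjTranspose_eq_transpose_of_trivial]; exact hA.1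
  have hBH : B.IsHermitian := by
    rw [Matrix.IsHermitian, Matrix.conjTranspose_eq_transpose_of_trivial]; exact hB.1
  set s : Fin N → ℝ := fun i => xhat i + yhat i with hs
  have hone : ∀ i, 0 < 1 - s i := fun i => by
    have := hs1 i; simp only [hs]; linarith
  have honex : ∀ i, 0 < 1 - xstar i := fun i => by linarith [(hxsb i).2]
  have honey : ∀ i, 0 < 1 - ystar i := fun i => by linarith [(hysb i).2]
  -- equilibrium identities
  have keyA : ∀ i, τ₁ * ∑ j, A i j * xhat j = xhat i / (1 - s i) := by
    intro i
    have h1 : (1 : ℝ) - xhat i - yhat i = 1 - s i := by simp only [hs]; ring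
    rw [heqA i, h1, ← mul_div_assoc, mul_div_mul_left _ _ hτ₁.ne']
  have keyB : ∀ i, τ₂ * ∑ j, B i j * yhat j = yhat i / (1 - s i) := by
    intro i
    have h1 : (1 : ℝ) - xhat i - yhat i = 1 - s i := by simp only [hs]; ring
    rw [heqB i, h1, ← mul_div_assoc, mul_div_mul_left _ _ hτ₂.ne']
  have keyxs : ∀ i, τ₁ * ∑ j, A i j * xstar j = xstar i / (1 - xstar i) := by
    intro i
    rw [hxse i, ← mul_div_assoc, mul_div_mul_left _ _ hτ₁.ne']
  have keyys : ∀ i, τ₂ * ∑ j, B i j * ystar j = ystar i / (1 - ystar i) := by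
    intro i
    rw [hyse i, ← mul_div_assoc, mul_div_mul_left _ _ hτ₂.ne']
  -- strict domination
  have hxlt : ∀ j, xhat j < xstar j := by
    intro j
    refine lt_of_lt_of_le (hpx j) ?_
    nlinarith [(hxsb j).1, hy0 j]
  have hylt : ∀ j, yhat j < ystar j := by
    intro j
    refine lt_of_lt_of_le (hpy j) ?_
    nlinarith [(hysb j).1, hx0 j]
  have hAnn : ∀ i j, 0 ≤ A i j := by
    intro i j; rcases hA.2.1 i j with h | h <;> rw [h] <;> norm_num
  have hBnn : ∀ i j, 0 ≤ B i j := by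
    intro i j; rcases hB.2.1 i j with h | h <;> rw [h] <;> norm_num
  have strictA : ∀ i, ∑ j, A i j * xhat j < ∑ j, A i j * xstar j := by
    intro i
    obtain ⟨l, hl⟩ := row_pos hA hN2 i
    exact Finset.sum_lt_sum
      (fun j _ => mul_le_mul_of_nonneg_left (hxlt j).le (hAnn i j))
      ⟨l, Finset.mem_univ l, mul_lt_mul_of_pos_left (hxlt l) hl⟩
  have strictB : ∀ i, ∑ j, B i j * yhat j < ∑ j, B i j * ystar j := by
    intro i
    obtain ⟨l, hl⟩ := row_pos hB hN2 i
    exact Finset.sum_lt_sum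
      (fun j _ => mul_le_mul_of_nonneg_left (hylt j).le (hBnn i j))
      ⟨l, Finset.mem_univ l, mul_lt_mul_of_pos_left (hylt l) hl⟩
  -- pointwise bound on 1/(1-s)
  have gbound : ∀ i, 1 / (1 - s i) < 1 / (1 - xstar i) + 1 / (1 - ystar i) - 1 := by
    intro i
    have e1 : 1 / (1 - s i) = 1 + xhat i / (1 - s i) + yhat i / (1 - s i) := by
      field_simp [(hone i).ne']
      simp only [hs]; ring
    have e2 : 1 / (1 - xstar i) = 1 + xstar i / (1 - xstar i) := by
      field_simp [(honex i).ne']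
      ring
    have e3 : 1 / (1 - ystar i) = 1 + ystar i / (1 - ystar i) := by
      field_simp [(honey i).ne']
      ring
    have hsA := mul_lt_mul_of_pos_left (strictA i) hτ₁
    have hsB := mul_lt_mul_of_pos_left (strictB i) hτ₂
    rw [keyA i, keyxs i] at hsA
    rw [keyB i, keyys i] at hsB
    linarith
  -- sum up
  have sumg : ∑ i, 1 / (1 - s i)
      < (∑ i, 1 / (1 - xstar i)) + (∑ i, 1 / (1 - ystar i)) - N := by
    have h := Finset.sum_lt_sum_of_nonempty Finset.univ_nonempty
      (fun i _ => gbound i)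
    have hsplit : ∑ i, (1 / (1 - xstar i) + 1 / (1 - ystar i) - 1)
        = (∑ i, 1 / (1 - xstar i)) + (∑ i, 1 / (1 - ystar i)) - N := by
      rw [Finset.sum_sub_distrib, Finset.sum_add_distrib]
      simp [Finset.card_univ]
    rw [hsplit] at h
    exact h
  have sumw := sum_inv_one_sub_le hAH hτ₁ hxsb hxse hNpos
  have sumh := sum_inv_one_sub_le hBH hτ₂ hysb hyse hNpos
  set D : ℝ := τ₁ * specRad A + τ₂ * specRad B - 1 with hD
  set G : ℝ := ∑ i, 1 / (1 - s i) with hG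
  have hGlt : G < (N : ℝ) * D := by
    rw [hD]; rw [hG]
    calc (∑ i, 1 / (1 - s i))
        < (∑ i, 1 / (1 - xstar i)) + (∑ i, 1 / (1 - ystar i)) - N := sumg
      _ ≤ (N : ℝ) * (τ₁ * specRad A) + (N : ℝ) * (τ₂ * specRad B) - N := by linarith
      _ = (N : ℝ) * (τ₁ * specRad A + τ₂ * specRad B - 1) := by ring
  have hNr : (0 : ℝ) < N := Nat.cast_pos.mpr hNpos
  have hNG : (N : ℝ) < G := by
    rw [hG]
    have : ∀ i : Fin N, (1 : ℝ) < 1 / (1 - s i) := by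
      intro i
      rw [lt_div_iff₀ (hone i)]
      have := hs1 i
      have := hx0 i
      simp only [hs]; nlinarith [hx0 i, hy0 i]
    calc (N : ℝ) = ∑ _i : Fin N, (1 : ℝ) := by simp [Finset.card_univ]
      _ < ∑ i, 1 / (1 - s i) := Finset.sum_lt_sum_of_nonempty Finset.univ_nonempty
          (fun i _ => this i)
  have hD1 : 1 < D := by
    have : (N : ℝ) * 1 < (N : ℝ) * D := by
      rw [mul_one]; exact lt_trans hNG hGlt
    exact lt_of_mul_lt_mul_left this hNr.le
  have hDpos : 0 < D := by linarith
  -- AM-HM via Chebyshev (antivary)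
  set T : ℝ := ∑ i, s i with hT
  have hTsum : T = (∑ i, xhat i) + ∑ i, yhat i := by
    rw [hT, Finset.sum_add_distrib]
  have hTlt : T < N := by
    rw [hT]
    calc ∑ i, s i < ∑ _i : Fin N, (1 : ℝ) :=
        Finset.sum_lt_sum_of_nonempty Finset.univ_nonempty (fun i _ => hs1 i)
      _ = N := by simp [Finset.card_univ]
  have hanti : Antivary (fun i => 1 - s i) (fun i => 1 / (1 - s i)) := by
    intro i j hlt
    have h2 := (div_lt_div_iff₀ (hone i) (hone j)).mp hlt
    simp only at h2 ⊢
    nlinarith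
  have cheb := hanti.card_mul_sum_le_sum_mul_sum
  rw [Fintype.card_fin] at cheb
  have hprod : ∑ i : Fin N, (1 - s i) * (1 / (1 - s i)) = (N : ℝ) := by
    have : ∀ i : Fin N, (1 - s i) * (1 / (1 - s i)) = 1 := by
      intro i; rw [mul_one_div, div_self (hone i).ne']
    rw [Finset.sum_congr rfl (fun i _ => this i)]
    simp [Finset.card_univ]
  rw [hprod] at cheb
  have hsub : ∑ i : Fin N, (1 - s i) = (N : ℝ) - T := by
    rw [Finset.sum_sub_distrib]
    simp [Finset.card_univ, hT]
  rw [hsub] at cheb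
  -- cheb : N * N ≤ (N - T) * G
  have hNT : (0 : ℝ) < (N : ℝ) - T := by linarith
  have step : (N : ℝ) * (N : ℝ) < ((N : ℝ) - T) * ((N : ℝ) * D) :=
    lt_of_le_of_lt cheb (mul_lt_mul_of_pos_left hGlt hNT)
  have hfin : (N : ℝ) < ((N : ℝ) - T) * D := by
    have h2 : (N : ℝ) * (N : ℝ) < (N : ℝ) * (((N : ℝ) - T) * D) := by
      calc (N : ℝ) * (N : ℝ) < ((N : ℝ) - T) * ((N : ℝ) * D) := step
        _ = (N : ℝ) * (((N : ℝ) - T) * D) := by ring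
    exact lt_of_mul_lt_mul_left h2 hNr.le
  rw [← hTsum]
  have hgoal : (1 / (N : ℝ)) * T = T / N := by ring
  rw [hgoal, div_lt_iff₀ hNr]
  have h2 : (N : ℝ) / D < (N : ℝ) - T := (div_lt_iff₀ hDpos).mpr hfin
  have h3 : (1 - 1 / D) * (N : ℝ) = (N : ℝ) - (N : ℝ) / D := by ring
  rw [h3]
  linarith
end
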